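/- arXiv:1404.0484 — 4 statements merged into one kernel-verified Lean document; each statement's English description precedes it below -/
import Mathlib

section
/- Let n ≥ 2 and let i be the least index in {1, …, n} with d_n(i) = i. If n ≤ i + f(i) (i.e. the arc (v_i, v_n) is present in J_n(1)), then v_i is the prime Jaconian vertex of J_n(1); that is, Δ(J_n(1)) = i and i is the least element of 𝕁(J_n(1)). -/
/-- The Jaco out-degree function `f`: `f 0 = 0` and, for `n ≥ 1`,
`f n = n - #{k : 1 ≤ k < n ∧ k + f k ≥ n}` (the out-degree of `v_n` in `J_∞(1)`). -/
def jacoF : ℕ → ℕ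
  | 0 => 0
  | n + 1 =>
    (n + 1) - ((Finset.range (n + 1)).attach.filter
      (fun a => 1 ≤ a.1 ∧ n + 1 ≤ a.1 + jacoF a.1)).card
  decreasing_by all_goals exact Finset.mem_range.mp a.2

/-- The in-degree `d⁻(j) = #{i : 1 ≤ i < j ∧ j ≤ i + f i}` of `v_j` in `J_∞(1)`. -/
def jacoDin (j : ℕ) : ℕ := ((Finset.Ico 1 j).filter (fun i => j ≤ i + jacoF i)).card

lemma jacoF_succ (n : ℕ) : jacoF (n+1) = (n+1) - jacoDin (n+1) := by
  rw [jacoF, jacoDin]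
  congr 1
  rw [Finset.filter_attach (fun a => 1 ≤ a ∧ n + 1 ≤ a + jacoF a), Finset.card_map,
    Finset.card_attach]
  congr 1
  ext a
  simp only [Finset.mem_filter, Finset.mem_range, Finset.mem_Ico]
  tauto

lemma jacoDin_le (n : ℕ) : jacoDin (n+1) ≤ n := by
  calc jacoDin (n+1) ≤ (Finset.Ico 1 (n+1)).card := Finset.card_filter_le _ _
  _ = n := by simp

lemma din_add_f (j : ℕ) (hj : 1 ≤ j) : jacoDin j + jacoF j = j := by
  obtain ⟨m, rfl⟩ : ∃ m, j = m + 1 := ⟨j - 1, by omega⟩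
  have := jacoF_succ m
  have := jacoDin_le m
  omega

lemma jacoF_mono : Monotone jacoF := by
  apply monotone_nat_of_le_succ
  intro n
  match n with
  | 0 => rw [jacoF]; exact Nat.zero_le _
  | m + 1 =>
    rw [jacoF_succ m, jacoF_succ (m+1)]
    have h1 : jacoDin (m+1+1) ≤ jacoDin (m+1) + 1 := by
      rw [jacoDin, jacoDin]
      have : Finset.Ico 1 (m+1+1) = insert (m+1) (Finset.Ico 1 (m+1)) := by
        ext a; simp [Finset.mem_Ico]
      rw [this, Finset.filter_insert]
      have hsub : (Finset.Ico 1 (m+1)).filter (fun i => m+1+1 ≤ i + jacoF i) ⊆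
          (Finset.Ico 1 (m+1)).filter (fun i => m+1 ≤ i + jacoF i) := by
        intro a ha
        simp only [Finset.mem_filter] at ha ⊢
        exact ⟨ha.1, by omega⟩
      have hc := Finset.card_le_card hsub
      split
      · have := Finset.card_insert_le (m+1)
          ((Finset.Ico 1 (m+1)).filter (fun i => m+1+1 ≤ i + jacoF i))
        omega
      · omega
    have h2 := jacoDin_le m
    have h3 := jacoDin_le (m+1)
    omega

/-- The degree `d_n(j) = d⁻(j) + #{k : j < k ≤ n ∧ k ≤ j + f j}` of `v_j` in the
underlying undirected graph of the finite Jaco graph `J_n(1)`. -/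
def jacoDeg (n j : ℕ) : ℕ :=
  jacoDin j + ((Finset.Ioc j n).filter (fun k => k ≤ j + jacoF j)).card

/-- The maximum degree `Δ(J_n(1)) = max_{1 ≤ j ≤ n} d_n(j)`. -/
def jacoDelta (n : ℕ) : ℕ := (Finset.Icc 1 n).sup (jacoDeg n)

/-- The Jaconian set `𝕁(J_n(1)) = {j : 1 ≤ j ≤ n ∧ d_n(j) = Δ(J_n(1))}`. -/
def jacoJ (n : ℕ) : Finset ℕ := (Finset.Icc 1 n).filter (fun j => jacoDeg n j = jacoDelta n)

lemma jacoDeg_eq (n j : ℕ) (hjn : j ≤ n) :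
    jacoDeg n j = jacoDin j + (min n (j + jacoF j) - j) := by
  rw [jacoDeg]
  congr 1
  have h : (Finset.Ioc j n).filter (fun k => k ≤ j + jacoF j)
      = Finset.Ioc j (min n (j + jacoF j)) := by
    ext a
    simp only [Finset.mem_filter, Finset.mem_Ioc]
    omega
  rw [h, Nat.card_Ioc]

/-- If `i` is the least index in `{1, …, n}` with `d_n(i) = i` and the arc `(v_i, v_n)`
is present in `J_n(1)` (i.e. `n ≤ i + f i`), then `v_i` is the prime Jaconian vertex of
`J_n(1)`: `Δ(J_n(1)) = i` and `i` is the least element of `𝕁(J_n(1))`. -/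
theorem stmt_0 (n i : ℕ) (hn : 2 ≤ n) (hi1 : 1 ≤ i) (hin : i ≤ n)
    (hdeg : jacoDeg n i = i)
    (hleast : ∀ j, 1 ≤ j → j ≤ n → jacoDeg n j = j → i ≤ j)
    (harc : n ≤ i + jacoF i) :
    jacoDelta n = i ∧ i ∈ jacoJ n ∧ ∀ j ∈ jacoJ n, i ≤ j := by
  have hdi := din_add_f i hi1
  have hdegi := jacoDeg_eq n i hin
  have hfi : jacoF i = n - i := by omega
  have hile : ∀ j, 1 ≤ j → j ≤ n → jacoDeg n j ≤ i := by
    intro j hj1 hjn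
    have hdj := din_add_f j hj1
    have hdegj := jacoDeg_eq n j hjn
    rcases le_total i j with h | h
    · have := jacoF_mono h
      omega
    · have := jacoF_mono h
      omega
  have hdelta : jacoDelta n = i := by
    apply le_antisymm
    · apply Finset.sup_le
      intro j hj
      rw [Finset.mem_Icc] at hj
      exact hile j hj.1 hj.2
    · calc i = jacoDeg n i := hdeg.symm
        _ ≤ jacoDelta n := Finset.le_sup (Finset.mem_Icc.mpr ⟨hi1, hin⟩)
  refine ⟨hdelta, ?_, ?_⟩
  · rw [jacoJ, Finset.mem_filter, Finset.mem_Icc]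
    exact ⟨⟨hi1, hin⟩, by rw [hdeg, hdelta]⟩
  · intro j hj
    rw [jacoJ, Finset.mem_filter, Finset.mem_Icc] at hj
    obtain ⟨⟨hj1, hjn⟩, hjd⟩ := hj
    rw [hdelta] at hjd
    have hdj := din_add_f j hj1
    have hdegj := jacoDeg_eq n j hjn
    rcases le_total i j with h | h
    · exact h
    · have := jacoF_mono h
      omega
end

section
/- For every n ≥ 1, the maximum degree of the Jaco graph increases by at most one when a vertex is added: Δ(J_{n+1}(1)) = Δ(J_n(1)) or Δ(J_{n+1}(1)) = Δ(J_n(1)) + 1. -/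
lemma jacoDeg_mono (n j : ℕ) : jacoDeg n j ≤ jacoDeg (n + 1) j := by
  unfold jacoDeg
  exact Nat.add_le_add_left (Finset.card_le_card
    (Finset.filter_subset_filter _ (Finset.Ioc_subset_Ioc_right (Nat.le_succ n)))) _

lemma jacoDelta_mono (n : ℕ) : jacoDelta n ≤ jacoDelta (n + 1) := by
  apply Finset.sup_le
  intro j hj
  calc jacoDeg n j ≤ jacoDeg (n + 1) j := jacoDeg_mono n j
    _ ≤ jacoDelta (n + 1) := Finset.le_sup (by
        simp only [Finset.mem_Icc] at hj ⊢; omega)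

lemma jacoDeg_succ_le (n j : ℕ) : jacoDeg (n + 1) j ≤ jacoDeg n j + 1 := by
  unfold jacoDeg
  have hsub : (Finset.Ioc j (n + 1)).filter (fun k => k ≤ j + jacoF j) ⊆
      insert (n + 1) ((Finset.Ioc j n).filter (fun k => k ≤ j + jacoF j)) := by
    intro k hk
    simp only [Finset.mem_filter, Finset.mem_Ioc, Finset.mem_insert] at hk ⊢
    omega
  calc jacoDin j + ((Finset.Ioc j (n + 1)).filter (fun k => k ≤ j + jacoF j)).card
      ≤ jacoDin j + (insert (n + 1) ((Finset.Ioc j n).filter (fun k => k ≤ j + jacoF j))).card :=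
        Nat.add_le_add_left (Finset.card_le_card hsub) _
    _ ≤ jacoDin j + (((Finset.Ioc j n).filter (fun k => k ≤ j + jacoF j)).card + 1) :=
        Nat.add_le_add_left (Finset.card_insert_le _ _) _
    _ = _ := by omega

lemma jacoDin_succ_le (n : ℕ) (hn : 1 ≤ n) : jacoDin (n + 1) ≤ jacoDelta n + 1 := by
  unfold jacoDin
  set S := (Finset.Ico 1 (n + 1)).filter (fun i => n + 1 ≤ i + jacoF i) with hS
  rcases S.eq_empty_or_nonempty with h | h
  · simp [h]
  · set i := S.max' h with hi
    have himem : i ∈ S := S.max'_mem h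
    have hi' : 1 ≤ i ∧ i < n + 1 ∧ n + 1 ≤ i + jacoF i := by
      have := himem
      rw [hS, Finset.mem_filter, Finset.mem_Ico] at this
      exact ⟨this.1.1, this.1.2, this.2⟩
    have hsub : S.erase i ⊆ (Finset.Ico 1 i).filter (fun j => i ≤ j + jacoF j) := by
      intro j hj
      have hjne : j ≠ i := (Finset.mem_erase.mp hj).1
      have hjS : j ∈ S := (Finset.mem_erase.mp hj).2
      have hle : j ≤ i := S.le_max' j hjS
      rw [hS, Finset.mem_filter, Finset.mem_Ico] at hjS
      rw [Finset.mem_filter, Finset.mem_Ico]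
      exact ⟨⟨hjS.1.1, by omega⟩, by omega⟩
    have h1 : S.card ≤ (S.erase i).card + 1 := by
      rw [Finset.card_erase_of_mem himem]; omega
    have h2 : (S.erase i).card ≤ jacoDin i := Finset.card_le_card hsub
    have h3 : jacoDin i ≤ jacoDeg n i := Nat.le_add_right _ _
    have h4 : jacoDeg n i ≤ jacoDelta n :=
      Finset.le_sup (by rw [Finset.mem_Icc]; omega)
    omega

/-- The maximum degree of the Jaco graph increases by at most one when a vertex is added. -/
theorem stmt_2 (n : ℕ) (hn : 1 ≤ n) :
    jacoDelta (n + 1) = jacoDelta n ∨ jacoDelta (n + 1) = jacoDelta n + 1 := by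
  have hlo : jacoDelta n ≤ jacoDelta (n + 1) := jacoDelta_mono n
  have hhi : jacoDelta (n + 1) ≤ jacoDelta n + 1 := by
    apply Finset.sup_le
    intro j hj
    rw [Finset.mem_Icc] at hj
    rcases Nat.lt_or_ge j (n + 1) with hlt | hge
    · have hjn : j ∈ Finset.Icc 1 n := by rw [Finset.mem_Icc]; omega
      calc jacoDeg (n + 1) j ≤ jacoDeg n j + 1 := jacoDeg_succ_le n j
        _ ≤ jacoDelta n + 1 := Nat.add_le_add_right (Finset.le_sup hjn) 1
    · have hj1 : j = n + 1 := by omega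
      subst hj1
      have : jacoDeg (n + 1) (n + 1) = jacoDin (n + 1) := by
        unfold jacoDeg; simp
      rw [this]
      exact jacoDin_succ_le n hn
  omega
end

section
/- Let n ≥ 1 and suppose Δ(J_n(1)) = k. Then for every j with k < j ≤ n, the out-degree of v_j within J_n(1) equals n − j; that is, #{m : j < m ≤ n and m ≤ j + f(j)} = n − j (equivalently, n ≤ j + f(j)). -/
lemma attach_card (m : ℕ) (p : ℕ → Prop) [DecidablePred p] :
    ((Finset.range m).attach.filter (fun a => p a.1)).card
      = ((Finset.range m).filter p).card := by
  rw [Finset.filter_attach]; simp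

lemma jacoF_eq (j : ℕ) (hj : 1 ≤ j) : jacoF j = j - jacoDin j := by
  obtain ⟨m, rfl⟩ := Nat.exists_eq_add_of_le hj
  rw [show 1 + m = m + 1 by ring, jacoF, jacoDin]
  rw [show ((Finset.range (m+1)).attach.filter
      (fun a => 1 ≤ a.1 ∧ m + 1 ≤ a.1 + jacoF a.1)).card
    = ((Finset.range (m+1)).filter (fun i => 1 ≤ i ∧ m + 1 ≤ i + jacoF i)).card from
      attach_card (m+1) (fun i => 1 ≤ i ∧ m + 1 ≤ i + jacoF i)]
  congr 2
  ext i
  simp [Finset.mem_filter, Finset.mem_range, Finset.mem_Ico, Nat.lt_succ_iff]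
  tauto

lemma jacoDin_le_s15 (j : ℕ) : jacoDin j ≤ j - 1 := by
  calc jacoDin j ≤ (Finset.Ico 1 j).card := Finset.card_filter_le _ _
    _ = j - 1 := Nat.card_Ico 1 j

/-- If `Δ(J_n(1)) = k`, then for every `j` with `k < j ≤ n` the out-degree of `v_j`
within `J_n(1)` equals `n - j`; equivalently `n ≤ j + f j`. -/
theorem stmt_15 (n k : ℕ) (hn : 1 ≤ n) (hk : jacoDelta n = k) :
    ∀ j, k < j → j ≤ n →
      ((Finset.Ioc j n).filter (fun m => m ≤ j + jacoF j)).card = n - j ∧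
        n ≤ j + jacoF j := by
  intro j hkj hjn
  have hj1 : 1 ≤ j := by omega
  have hnle : n ≤ j + jacoF j := by
    by_contra h
    push_neg at h
    have hout : ((Finset.Ioc j n).filter (fun m => m ≤ j + jacoF j)).card = jacoF j := by
      have : (Finset.Ioc j n).filter (fun m => m ≤ j + jacoF j) = Finset.Ioc j (j + jacoF j) := by
        ext m
        simp [Finset.mem_filter, Finset.mem_Ioc]
        omega
      rw [this, Nat.card_Ioc]
      omega
    have hdle : jacoDeg n j ≤ jacoDelta n :=
      Finset.le_sup (Finset.mem_Icc.mpr ⟨hj1, hjn⟩)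
    have hdinle := jacoDin_le_s15 j
    have hfe := jacoF_eq j hj1
    have : jacoDeg n j = j := by
      rw [jacoDeg, hout, hfe]; omega
    omega
  refine ⟨?_, hnle⟩
  have : (Finset.Ioc j n).filter (fun m => m ≤ j + jacoF j) = Finset.Ioc j n := by
    apply Finset.filter_true_of_mem
    intro m hm
    have := Finset.mem_Ioc.mp hm
    omega
  rw [this, Nat.card_Ioc]
end

section
/- (Bettina's Theorem) Let r ≥ 1 and let i_1 > i_2 > … > i_r ≥ 2 be indices with i_j ≥ i_{j+1} + 2 for all 1 ≤ j < r (so that n = fib(i_1) + fib(i_2) + … + fib(i_r) is the Zeckendorf representation of n). Then the out-degree of v_n in J_∞(1) is f(n) = fib(i_1 − 1) + fib(i_2 − 1) + … + fib(i_r − 1). -/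
section JacoAux
open Nat Finset

/-- greedy Zeckendorf shift-down -/
def gZ : ℕ → ℕ
  | 0 => 0
  | n + 1 =>
    Nat.fib (Nat.findGreatest (fun k => Nat.fib k ≤ n + 1) (n + 2) - 1) +
      gZ (n + 1 - Nat.fib (Nat.findGreatest (fun k => Nat.fib k ≤ n + 1) (n + 2)))
  decreasing_by
    have h2 : 2 ≤ Nat.findGreatest (fun k => Nat.fib k ≤ n + 1) (n + 2) :=
      Nat.le_findGreatest (by omega) (by simp)
    have : 0 < Nat.fib (Nat.findGreatest (fun k => Nat.fib k ≤ n + 1) (n + 2)) :=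
      Nat.fib_pos.2 (by omega)
    omega

lemma fib_ge (m : ℕ) : m ≤ Nat.fib m + 1 := by
  induction m using Nat.strong_induction_on with
  | _ m ih =>
    match m, ih with
    | 0, _ => simp
    | 1, _ => simp
    | 2, _ => simp
    | (k+3), ih =>
      have h1 := ih (k+2) (by omega)
      have h2 : 0 < Nat.fib (k+1) := Nat.fib_pos.2 (by omega)
      have : Nat.fib (k+3) = Nat.fib (k+1) + Nat.fib (k+2) := Nat.fib_add_two
      omega

lemma gZ_eq {n m : ℕ} (hm : 2 ≤ m) (h1 : Nat.fib m ≤ n) (h2 : n < Nat.fib (m+1)) :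
    gZ n = Nat.fib (m-1) + gZ (n - Nat.fib m) := by
  have hfib : 0 < Nat.fib m := Nat.fib_pos.2 (by omega)
  obtain ⟨n', rfl⟩ : ∃ n', n = n' + 1 := ⟨n - 1, by omega⟩
  have hfg : Nat.findGreatest (fun k => Nat.fib k ≤ n' + 1) (n' + 2) = m := by
    rw [Nat.findGreatest_eq_iff]
    refine ⟨by have := fib_ge m; omega, fun _ => h1, fun k hk hk2 => ?_⟩
    have : Nat.fib (m+1) ≤ Nat.fib k := Nat.fib_mono hk
    omega
  conv_lhs => rw [gZ]
  rw [hfg]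

lemma exists_top {n : ℕ} (hn : 1 ≤ n) : ∃ m, 2 ≤ m ∧ Nat.fib m ≤ n ∧ n < Nat.fib (m+1) := by
  set m := Nat.findGreatest (fun k => Nat.fib k ≤ n) (n + 1) with hm
  have h2 : 2 ≤ m := Nat.le_findGreatest (by omega) (by simp; omega)
  have hP : Nat.fib m ≤ n :=
    Nat.findGreatest_of_ne_zero (P := fun k => Nat.fib k ≤ n) hm.symm (by omega)
  refine ⟨m, h2, hP, ?_⟩
  by_cases hb : m + 1 ≤ n + 1
  · have := Nat.findGreatest_is_greatest (P := fun k => Nat.fib k ≤ n) (n := n+1)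
      (k := m+1) (by omega) hb
    omega
  · -- m = n + 1
    have hle : m ≤ n + 1 := Nat.findGreatest_le _
    have hmn : m = n + 1 := by omega
    have := fib_ge (n+2)
    have hf : Nat.fib (m + 1) = Nat.fib (n+2) := by rw [hmn]
    omega

/-- top decomposition -/
lemma gZ_rec {n : ℕ} (hn : 1 ≤ n) :
    ∃ m, 2 ≤ m ∧ Nat.fib m ≤ n ∧ n < Nat.fib (m+1) ∧
      gZ n = Nat.fib (m-1) + gZ (n - Nat.fib m) := by
  obtain ⟨m, hm, h1, h2⟩ := exists_top hn
  exact ⟨m, hm, h1, h2, gZ_eq hm h1 h2⟩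

lemma fib_split {m : ℕ} (h : 2 ≤ m) : Nat.fib (m-2) + Nat.fib (m-1) = Nat.fib m := by
  obtain ⟨k, rfl⟩ : ∃ k, m = k + 2 := ⟨m - 2, by omega⟩
  simpa using Nat.fib_add_two.symm

lemma fib_split' {m : ℕ} (h : 1 ≤ m) : Nat.fib (m-1) + Nat.fib m = Nat.fib (m+1) := by
  obtain ⟨k, rfl⟩ : ∃ k, m = k + 1 := ⟨m - 1, by omega⟩
  simpa using Nat.fib_add_two.symm

lemma gZ_le_fib : ∀ s : ℕ, ∀ j, 2 ≤ j → s ≤ Nat.fib j → gZ s ≤ Nat.fib (j-1) := by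
  intro s
  induction s using Nat.strong_induction_on with
  | _ s ih =>
    intro j hj hs
    rcases Nat.eq_zero_or_pos s with rfl | hpos
    · simp [gZ]
    obtain ⟨t, ht2, ht1, ht2', heq⟩ := gZ_rec hpos
    have htj : t ≤ j := by
      by_contra h
      have : Nat.fib (j+1) ≤ Nat.fib t := Nat.fib_mono (by omega)
      have : Nat.fib j < Nat.fib (j+1) := Nat.fib_lt_fib_succ hj
      omega
    rcases eq_or_lt_of_le htj with rfl | hlt
    · -- s = fib t
      have : s = Nat.fib t := by
        have : Nat.fib t ≤ s := ht1
        omega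
      rw [heq, this]
      simp [gZ]
    · -- t ≤ j - 1
      have hfibt : 0 < Nat.fib t := Nat.fib_pos.2 (by omega)
      have hsub : s - Nat.fib t ≤ Nat.fib (t-1) := by
        have := fib_split ht2
        have h3 : Nat.fib (t-1) + Nat.fib t = Nat.fib (t+1) := fib_split' (by omega)
        omega
      rcases Nat.lt_or_ge t 3 with h3 | h3
      · -- t = 2, s = 1
        interval_cases t
        have hs1 : s = 1 := by
          have : s < 2 := by simpa [show Nat.fib 3 = 2 from rfl] using ht2'
          omega
        subst hs1
        rw [heq]
        have : 1 ≤ Nat.fib (j-1) := Nat.fib_pos.2 (by omega)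
        simpa [gZ] using this
      · have hrec := ih (s - Nat.fib t) (by omega) (t-1) (by omega) hsub
        have : Nat.fib (t-1-1) = Nat.fib (t-2) := rfl
        rw [heq]
        have hft : Nat.fib t ≤ Nat.fib (j-1) := Nat.fib_mono (by omega)
        have := fib_split ht2
        omega

lemma gZ_le_self : ∀ n, gZ n ≤ n := by
  intro n
  induction n using Nat.strong_induction_on with
  | _ n ih =>
    rcases Nat.eq_zero_or_pos n with rfl | hpos
    · simp [gZ]
    obtain ⟨m, hm, h1, h2, heq⟩ := gZ_rec hpos
    have hfib : 0 < Nat.fib m := Nat.fib_pos.2 (by omega)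
    have := ih (n - Nat.fib m) (by omega)
    have : Nat.fib (m-1) ≤ Nat.fib m := Nat.fib_mono (by omega)
    omega

lemma gZ_pos {n : ℕ} (hn : 1 ≤ n) : 1 ≤ gZ n := by
  obtain ⟨m, hm, h1, h2, heq⟩ := gZ_rec hn
  have : 0 < Nat.fib (m-1) := Nat.fib_pos.2 (by omega)
  omega

/-- additivity lemma E -/
lemma gZ_add {m s : ℕ} (hm : 2 ≤ m) (hs : s ≤ Nat.fib (m-1)) (h2 : m = 2 → s = 0) :
    gZ (Nat.fib m + s) = Nat.fib (m-1) + gZ s := by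
  rcases eq_or_lt_of_le hm with rfl | hm3
  · rw [h2 rfl]
    have h1 : gZ 1 = 1 := by
      have := gZ_eq (n := 1) (m := 2) le_rfl (by decide) (by decide)
      simpa [gZ] using this
    simpa [gZ] using h1
  · have hm3 : 3 ≤ m := hm3
    have hsplit : Nat.fib (m-1) + Nat.fib m = Nat.fib (m+1) := fib_split' (by omega)
    rcases eq_or_lt_of_le hs with rfl | hlt
    · -- s = fib (m-1)
      have e1 : Nat.fib m + Nat.fib (m-1) = Nat.fib (m+1) := by omega
      rw [e1]
      have hl : gZ (Nat.fib (m+1)) = Nat.fib m := by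
        have := gZ_eq (n := Nat.fib (m+1)) (m := m+1) (by omega) le_rfl
          (Nat.fib_lt_fib_succ (by omega))
        simpa [gZ] using this
      have hr : gZ (Nat.fib (m-1)) = Nat.fib (m-2) := by
        have hlt2 : Nat.fib (m-1) < Nat.fib (m-1+1) := Nat.fib_lt_fib_succ (by omega)
        have e2 : m - 1 + 1 = m := by omega
        have := gZ_eq (n := Nat.fib (m-1)) (m := m-1) (by omega) le_rfl (by omega)
        have e3 : m - 1 - 1 = m - 2 := by omega
        simpa [gZ, e3] using this
      rw [hl, hr]
      have := fib_split hm
      omega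
    · have h1 : Nat.fib m ≤ Nat.fib m + s := by omega
      have h2' : Nat.fib m + s < Nat.fib (m+1) := by omega
      rw [gZ_eq hm h1 h2']
      have e : Nat.fib m + s - Nat.fib m = s := by omega
      rw [e]

lemma gZ_mono : Monotone gZ := by
  have key : ∀ b a, a ≤ b → gZ a ≤ gZ b := by
    intro b
    induction b using Nat.strong_induction_on with
    | _ b ih =>
      intro a hab
      rcases Nat.eq_zero_or_pos a with rfl | ha
      · simp [gZ]
      have hb : 1 ≤ b := le_trans ha hab
      obtain ⟨ma, hma, ha1, ha2, heqa⟩ := gZ_rec ha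
      obtain ⟨mb, hmb, hb1, hb2, heqb⟩ := gZ_rec hb
      have hmm : ma ≤ mb := by
        by_contra h
        have : Nat.fib (mb+1) ≤ Nat.fib ma := Nat.fib_mono (by omega)
        omega
      have hfa : 0 < Nat.fib ma := Nat.fib_pos.2 (by omega)
      rcases eq_or_lt_of_le hmm with rfl | hlt
      · rw [heqa, heqb]
        have := ih (b - Nat.fib ma) (by omega) (a - Nat.fib ma) (by omega)
        omega
      · have hC : gZ a ≤ Nat.fib ma := by
          have := gZ_le_fib a (ma+1) (by omega) (by omega)
          simpa using this
        have : Nat.fib ma ≤ Nat.fib (mb - 1) := Nat.fib_mono (by omega)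
        omega
  intro a b h
  exact key b a h

/-- Lemma A -/
lemma gZ_A : ∀ n, n ≤ gZ n + gZ (gZ n) := by
  intro n
  induction n using Nat.strong_induction_on with
  | _ n ih =>
    rcases Nat.eq_zero_or_pos n with rfl | hn
    · simp [gZ]
    obtain ⟨m, hm, h1, h2, heq⟩ := gZ_rec hn
    set s := n - Nat.fib m with hsdef
    have hfa : 0 < Nat.fib m := Nat.fib_pos.2 (by omega)
    have hsplit : Nat.fib (m-1) + Nat.fib m = Nat.fib (m+1) := fib_split' (by omega)
    have hslt : s < Nat.fib (m-1) := by omega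
    rcases eq_or_lt_of_le hm with rfl | hm3
    · -- m = 2, n = 1
      have hn1 : n = 1 := by
        have e : Nat.fib (2+1) = 2 := rfl
        omega
      subst hn1
      have h1' : gZ 1 = 1 := by
        have := gZ_eq (n := 1) (m := 2) le_rfl (by decide) (by decide)
        simpa [gZ] using this
      rw [h1']; omega
    · have hm3 : 3 ≤ m := hm3
      have hgs : gZ s ≤ Nat.fib (m-2) := by
        have := gZ_le_fib s (m-1) (by omega) (by omega)
        have e : m - 1 - 1 = m - 2 := rfl
        rwa [e] at this
      have hE : gZ (Nat.fib (m-1) + gZ s) = Nat.fib (m-2) + gZ (gZ s) := by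
        have e : m - 1 - 1 = m - 2 := rfl
        rw [← e]
        refine gZ_add (by omega) (by rwa [e]) ?_
        intro hm1
        -- m = 3, s = 0
        have : s = 0 := by
          have : m = 3 := by omega
          subst this
          simp at hslt
          omega
        simp [this, gZ]
      rw [heq, hE]
      have := ih s (by omega)
      have := fib_split hm
      omega

/-- Lemma B -/
lemma gZ_B : ∀ n, 1 ≤ n → gZ n + gZ (gZ n - 1) ≤ n := by
  intro n
  induction n using Nat.strong_induction_on with
  | _ n ih =>
    intro hn
    obtain ⟨m, hm, h1, h2, heq⟩ := gZ_rec hn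
    set s := n - Nat.fib m with hsdef
    have hfa : 0 < Nat.fib m := Nat.fib_pos.2 (by omega)
    have hsplit : Nat.fib (m-1) + Nat.fib m = Nat.fib (m+1) := fib_split' (by omega)
    have hslt : s < Nat.fib (m-1) := by omega
    rcases eq_or_lt_of_le hm with rfl | hm3
    · -- m = 2, n = 1
      have hn1 : n = 1 := by
        have e : Nat.fib (2+1) = 2 := rfl
        omega
      subst hn1
      have h1' : gZ 1 = 1 := by
        have := gZ_eq (n := 1) (m := 2) le_rfl (by decide) (by decide)
        simpa [gZ] using this
      rw [h1']; simp [gZ]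
    · have hm3 : 3 ≤ m := hm3
      have hgs : gZ s ≤ Nat.fib (m-2) := by
        have := gZ_le_fib s (m-1) (by omega) (by omega)
        have e : m - 1 - 1 = m - 2 := rfl
        rwa [e] at this
      have hfibsplit := fib_split hm
      rcases Nat.eq_zero_or_pos s with hs0 | hs
      · -- n = fib m
        rw [heq, hs0]
        have hz : gZ 0 = 0 := by simp [gZ]
        rw [hz]
        simp only [Nat.add_zero]
        have hC : gZ (Nat.fib (m-1) - 1) ≤ Nat.fib (m-2) := by
          have := gZ_le_fib (Nat.fib (m-1) - 1) (m-1) (by omega) (by omega)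
          have e : m - 1 - 1 = m - 2 := rfl
          rwa [e] at this
        omega
      · have hgs1 : 1 ≤ gZ s := gZ_pos hs
        have hE : gZ (Nat.fib (m-1) + (gZ s - 1)) = Nat.fib (m-2) + gZ (gZ s - 1) := by
          have e : m - 1 - 1 = m - 2 := rfl
          rw [← e]
          refine gZ_add (by omega) (by rw [e]; omega) ?_
          intro hm1
          exfalso
          have : m = 3 := by omega
          subst this
          simp at hslt
          omega
        have heq1 : gZ n - 1 = Nat.fib (m-1) + (gZ s - 1) := by
          have : 0 < Nat.fib (m-1) := Nat.fib_pos.2 (by omega)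
          omega
        rw [heq1, heq, hE]
        have := ih s (by omega) hs
        omega


lemma gZ_count {N : ℕ} (hN : 1 ≤ N) :
    ((Finset.Ico 1 N).filter fun k => N ≤ k + gZ k).card = N - gZ N := by
  have hpos := gZ_pos hN
  have hle := gZ_le_self N
  have hset : ((Finset.Ico 1 N).filter fun k => N ≤ k + gZ k) = Finset.Ico (gZ N) N := by
    ext k
    simp only [Finset.mem_filter, Finset.mem_Ico]
    constructor
    · rintro ⟨⟨hk1, hk2⟩, hk3⟩
      refine ⟨?_, hk2⟩
      by_contra h
      have hk : k ≤ gZ N - 1 := by omega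
      have h1 : gZ k ≤ gZ (gZ N - 1) := gZ_mono hk
      have h2 := gZ_B N hN
      omega
    · rintro ⟨hk1, hk2⟩
      have h1 : gZ (gZ N) ≤ gZ k := gZ_mono hk1
      have h2 := gZ_A N
      exact ⟨⟨by omega, hk2⟩, by omega⟩
  rw [hset, Nat.card_Ico]

lemma jacoF_eq_gZ : ∀ n, jacoF n = gZ n := by
  intro n
  induction n using Nat.strong_induction_on with
  | _ n ih =>
    match n, ih with
    | 0, _ => simp [jacoF, gZ]
    | (m+1), ih =>
      rw [jacoF]
      have h1 : ((Finset.range (m + 1)).attach.filter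
          (fun a => 1 ≤ a.1 ∧ m + 1 ≤ a.1 + jacoF a.1)).card
          = ((Finset.range (m + 1)).filter fun k => 1 ≤ k ∧ m + 1 ≤ k + jacoF k).card := by
        rw [Finset.filter_attach (fun k => 1 ≤ k ∧ m + 1 ≤ k + jacoF k) (Finset.range (m+1))]
        simp
      rw [h1]
      have h2 : ((Finset.range (m + 1)).filter fun k => 1 ≤ k ∧ m + 1 ≤ k + jacoF k)
          = ((Finset.Ico 1 (m+1)).filter fun k => m + 1 ≤ k + gZ k) := by
        ext k
        simp only [Finset.mem_filter, Finset.mem_range, Finset.mem_Ico]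
        constructor
        · rintro ⟨hk, hk1, hk2⟩
          rw [ih k (by omega)] at hk2
          exact ⟨⟨hk1, hk⟩, hk2⟩
        · rintro ⟨⟨hk1, hk⟩, hk2⟩
          rw [← ih k (by omega)] at hk2
          exact ⟨hk, hk1, hk2⟩
      rw [h2, gZ_count (by omega)]
      have := gZ_le_self (m+1)
      have := gZ_pos (show 1 ≤ m+1 by omega)
      omega

lemma zeck_bound : ∀ r, 1 ≤ r → ∀ i : ℕ → ℕ, 2 ≤ i (r-1) →
    (∀ j, j + 1 < r → i (j+1) + 2 ≤ i j) →
    (∑ j ∈ Finset.range r, Nat.fib (i j)) < Nat.fib (i 0 + 1) := by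
  intro r
  induction r with
  | zero => omega
  | succ r ihr =>
    intro _ i hlast hgap
    rcases Nat.eq_zero_or_pos r with rfl | hr
    · simp at hlast ⊢
      exact Nat.fib_lt_fib_succ hlast
    have hrr : r - 1 + 1 = r := by omega
    have hlast' : 2 ≤ i ((r-1) + 1) := by rw [hrr]; simpa using hlast
    have hsum : ∑ j ∈ Finset.range (r+1), Nat.fib (i j)
        = (∑ j ∈ Finset.range r, Nat.fib (i (j+1))) + Nat.fib (i 0) :=
      Finset.sum_range_succ' _ r
    have htail : (∑ j ∈ Finset.range r, Nat.fib (i (j+1))) < Nat.fib (i 1 + 1) :=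
      ihr hr (fun j => i (j+1)) hlast' (fun j hj => hgap (j+1) (by omega))
    have hgap0 : i 1 + 2 ≤ i 0 := hgap 0 (by omega)
    have h1 : Nat.fib (i 1 + 1) ≤ Nat.fib (i 0 - 1) := Nat.fib_mono (by omega)
    have h2 : Nat.fib (i 0 - 1) + Nat.fib (i 0) = Nat.fib (i 0 + 1) := fib_split' (by omega)
    omega

lemma zeck_gZ : ∀ r, 1 ≤ r → ∀ i : ℕ → ℕ, 2 ≤ i (r-1) →
    (∀ j, j + 1 < r → i (j+1) + 2 ≤ i j) →
    gZ (∑ j ∈ Finset.range r, Nat.fib (i j)) = ∑ j ∈ Finset.range r, Nat.fib (i j - 1) := by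
  intro r
  induction r with
  | zero => omega
  | succ r ihr =>
    intro _ i hlast hgap
    rcases Nat.eq_zero_or_pos r with rfl | hr
    · simp at hlast ⊢
      have := gZ_add (m := i 0) (s := 0) hlast (by simp) (by simp)
      simpa [gZ] using this
    have hrr : r - 1 + 1 = r := by omega
    have hlast' : 2 ≤ i ((r-1) + 1) := by rw [hrr]; simpa using hlast
    have hsum : ∑ j ∈ Finset.range (r+1), Nat.fib (i j)
        = Nat.fib (i 0) + (∑ j ∈ Finset.range r, Nat.fib (i (j+1))) := by
      rw [Finset.sum_range_succ' _ r]; omega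
    have hsum' : ∑ j ∈ Finset.range (r+1), Nat.fib (i j - 1)
        = Nat.fib (i 0 - 1) + (∑ j ∈ Finset.range r, Nat.fib (i (j+1) - 1)) := by
      rw [Finset.sum_range_succ' _ r]; omega
    have hgap' : ∀ j, j + 1 < r → i ((j+1) + 1) + 2 ≤ i (j+1) :=
      fun j hj => hgap (j+1) (by omega)
    have htail : (∑ j ∈ Finset.range r, Nat.fib (i (j+1))) < Nat.fib (i 1 + 1) :=
      zeck_bound r hr (fun j => i (j+1)) hlast' hgap'
    have hgap0 : i 1 + 2 ≤ i 0 := hgap 0 (by omega)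
    have h1 : Nat.fib (i 1 + 1) ≤ Nat.fib (i 0 - 1) := Nat.fib_mono (by omega)
    have hE := gZ_add (m := i 0) (s := ∑ j ∈ Finset.range r, Nat.fib (i (j+1)))
      (by omega) (by omega)
      (by
        intro h
        have h0 : i 1 = 0 := by omega
        have h1' : Nat.fib (i 1 + 1) = 1 := by rw [h0]; rfl
        omega)
    have hIH : gZ (∑ j ∈ Finset.range r, Nat.fib (i (j+1)))
        = ∑ j ∈ Finset.range r, Nat.fib (i (j+1) - 1) :=
      ihr hr (fun j => i (j+1)) hlast' hgap'
    rw [hsum, hE, hsum', hIH]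


end JacoAux

/-- (Bettina's Theorem) If `n = fib i₁ + fib i₂ + ⋯ + fib iᵣ` is the Zeckendorf
representation of `n` (indices `i₁ > i₂ > ⋯ > iᵣ ≥ 2`, consecutive indices differing
by at least 2), then `f n = fib (i₁ - 1) + fib (i₂ - 1) + ⋯ + fib (iᵣ - 1)`. -/
theorem stmt_17 (r : ℕ) (hr : 1 ≤ r) (i : ℕ → ℕ)
    (hlast : 2 ≤ i (r - 1))
    (hgap : ∀ j, j + 1 < r → i (j + 1) + 2 ≤ i j)
    (n : ℕ) (hn : n = ∑ j ∈ Finset.range r, Nat.fib (i j)) :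
    jacoF n = ∑ j ∈ Finset.range r, Nat.fib (i j - 1) := by
  rw [jacoF_eq_gZ, hn]
  exact zeck_gZ r hr i hlast hgap
end
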